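/- Assume condition (H). Then in the region m ≤ n, the distance d_{m,n} is nonincreasing in m (d_{m,n} ≤ d_{m-1,n} for 0 ≤ m ≤ n) and nondecreasing in n (d_{m,n} ≤ d_{m,n+1}). -/
import Mathlib


/-- `p` is a probability distribution on `ℕ` supported on `{0,…,n}`. -/
def IsProbOn (p : ℕ → ℝ) (n : ℕ) : Prop :=
  (∀ i, 0 ≤ p i) ∧ (∀ i, n < i → p i = 0) ∧ ∑ i ∈ Finset.range (n + 1), p i = 1

/-- `z` is a transport plan from `μ` (supported on `{0,…,m}`) to `ν` (supported on `{0,…,n}`):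
a nonnegative matrix on the rectangle `{0,…,m} × {0,…,n}` with row sums `μ` and column sums `ν`. -/
def IsPlan (μ ν : ℕ → ℝ) (m n : ℕ) (z : ℕ → ℕ → ℝ) : Prop :=
  (∀ i j, 0 ≤ z i j) ∧
  (∀ i j, m < i ∨ n < j → z i j = 0) ∧
  (∀ i, i ≤ m → ∑ j ∈ Finset.range (n + 1), z i j = μ i) ∧
  (∀ j, j ≤ n → ∑ i ∈ Finset.range (m + 1), z i j = ν j)

/-- Transport cost of the plan `z` with ground cost `(i,j) ↦ D i j` (where `D i j`
encodes `d_{i-1,j-1}` of the paper, indices shifted by one so that `0` plays the role of `-1`). -/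
noncomputable def cost (D : ℕ → ℕ → ℝ) (m n : ℕ) (z : ℕ → ℕ → ℝ) : ℝ :=
  ∑ i ∈ Finset.range (m + 1), ∑ j ∈ Finset.range (n + 1), z i j * D i j

/-- `D` is the recursive optimal transport family associated with the weights `π`:
indices are shifted by one, so `D (m+1) (n+1) = d_{m,n}`, `D 0 (j+1) = d_{-1,j} = 1`,
`D 0 0 = d_{-1,-1} = 0`, and `d_{m,n}` is the minimum transport cost from `π m` to `π n`
with ground cost `(i,j) ↦ d_{i-1,j-1} = D i j`. -/
def IsRecursiveOT (π : ℕ → ℕ → ℝ) (D : ℕ → ℕ → ℝ) : Prop :=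
  D 0 0 = 0 ∧ (∀ j, D 0 (j + 1) = 1) ∧ (∀ i, D (i + 1) 0 = 1) ∧
  ∀ m n, IsLeast {c : ℝ | ∃ z, IsPlan (π m) (π n) m n z ∧ c = cost D m n z}
    (D (m + 1) (n + 1))

/-- Condition (H): `π_n^n > 0` and `π_i^n ≤ π_i^{n-1}` for `i < n`. -/
def CondH (π : ℕ → ℕ → ℝ) : Prop :=
  ∀ n, 0 < π (n + 1) (n + 1) ∧ ∀ i, i ≤ n → π (n + 1) i ≤ π n i

section Basics

variable {π D : ℕ → ℕ → ℝ}

lemma pi_nonneg (hπ : ∀ n, IsProbOn (π n) n) (n i : ℕ) : 0 ≤ π n i := (hπ n).1 i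

lemma pi_zero (hπ : ∀ n, IsProbOn (π n) n) {n i : ℕ} (h : n < i) : π n i = 0 :=
  (hπ n).2.1 i h

lemma pi_sum (hπ : ∀ n, IsProbOn (π n) n) (n : ℕ) :
    ∑ i ∈ Finset.range (n + 1), π n i = 1 := (hπ n).2.2

lemma pi_sum_ge (hπ : ∀ n, IsProbOn (π n) n) {n k : ℕ} (h : n ≤ k) :
    ∑ i ∈ Finset.range (k + 1), π n i = 1 := by
  rw [← pi_sum hπ n]
  exact (Finset.sum_subset (by gcongr <;> omega) (fun x _ hx => pi_zero hπ (by
    simp [Finset.mem_range] at hx ⊢; omega))).symm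

lemma pi_le_one (hπ : ∀ n, IsProbOn (π n) n) (n i : ℕ) : π n i ≤ 1 := by
  rcases le_or_gt i n with h | h
  · calc π n i ≤ ∑ j ∈ Finset.range (n + 1), π n j :=
        Finset.single_le_sum (fun j _ => pi_nonneg hπ n j) (by simp; omega)
    _ = 1 := pi_sum hπ n
  · rw [pi_zero hπ h]; norm_num

/-- condition (H) chain: `π b i ≤ π a i` for `i ≤ a ≤ b`. -/
lemma pi_anti (hπ : ∀ n, IsProbOn (π n) n) (hH : CondH π) {i a b : ℕ}
    (hia : i ≤ a) (hab : a ≤ b) : π b i ≤ π a i := by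
  induction b, hab using Nat.le_induction with
  | base => exact le_refl _
  | succ b hab ih => exact le_trans ((hH b).2 i (by omega)) ih

lemma plan_exists (hD : IsRecursiveOT π D) (m n : ℕ) :
    ∃ z, IsPlan (π m) (π n) m n z ∧ D (m + 1) (n + 1) = cost D m n z :=
  (hD.2.2.2 m n).1

lemma plan_le (hD : IsRecursiveOT π D) {m n : ℕ} {z : ℕ → ℕ → ℝ}
    (hz : IsPlan (π m) (π n) m n z) : D (m + 1) (n + 1) ≤ cost D m n z :=
  (hD.2.2.2 m n).2 ⟨z, hz, rfl⟩

end Basics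

section Metric

variable {π D : ℕ → ℕ → ℝ}

lemma cost_nonneg {m n : ℕ} {z : ℕ → ℕ → ℝ} (hz : ∀ i j, 0 ≤ z i j)
    (hDnn : ∀ i j, i ≤ m → j ≤ n → 0 ≤ D i j) : 0 ≤ cost D m n z := by
  apply Finset.sum_nonneg
  intro i hi
  apply Finset.sum_nonneg
  intro j hj
  simp only [Finset.mem_range] at hi hj
  exact mul_nonneg (hz i j) (hDnn i j (by omega) (by omega))

lemma D_nonneg (hπ : ∀ n, IsProbOn (π n) n) (hD : IsRecursiveOT π D) (x y : ℕ) :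
    0 ≤ D x y := by
  suffices h : ∀ s x y, x + y ≤ s → (0:ℝ) ≤ D x y from h (x+y) x y le_rfl
  intro s
  induction s with
  | zero => intro x y hxy
            obtain ⟨rfl, rfl⟩ : x = 0 ∧ y = 0 := by omega
            rw [hD.1]
  | succ s ih =>
    intro x y hxy
    match x, y with
    | 0, 0 => rw [hD.1]
    | 0, (j+1) => rw [hD.2.1]; norm_num
    | (i+1), 0 => rw [hD.2.2.1]; norm_num
    | (m+1), (n+1) =>
      obtain ⟨z, hz, hcost⟩ := plan_exists hD m n
      rw [hcost]
      exact cost_nonneg hz.1 (fun i j hi hj => ih i j (by omega))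

lemma D_le_one (hπ : ∀ n, IsProbOn (π n) n) (hD : IsRecursiveOT π D) (x y : ℕ) :
    D x y ≤ 1 := by
  suffices h : ∀ s x y, x + y ≤ s → D x y ≤ 1 from h (x+y) x y le_rfl
  intro s
  induction s with
  | zero => intro x y hxy
            obtain ⟨rfl, rfl⟩ : x = 0 ∧ y = 0 := by omega
            rw [hD.1]; norm_num
  | succ s ih =>
    intro x y hxy
    match x, y with
    | 0, 0 => rw [hD.1]; norm_num
    | 0, (j+1) => rw [hD.2.1]
    | (i+1), 0 => rw [hD.2.2.1]
    | (m+1), (n+1) =>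
      obtain ⟨z, hz, hcost⟩ := plan_exists hD m n
      rw [hcost]
      calc cost D m n z ≤ ∑ i ∈ Finset.range (m+1), ∑ j ∈ Finset.range (n+1), z i j := by
            apply Finset.sum_le_sum
            intro i hi
            apply Finset.sum_le_sum
            intro j hj
            simp only [Finset.mem_range] at hi hj
            calc z i j * D i j ≤ z i j * 1 := by
                  apply mul_le_mul_of_nonneg_left (ih i j (by omega)) (hz.1 i j)
              _ = z i j := mul_one _
        _ = ∑ i ∈ Finset.range (m+1), π m i := by
            apply Finset.sum_congr rfl
            intro i hi
            exact hz.2.2.1 i (by simp at hi; omega)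
        _ = 1 := pi_sum hπ m

lemma D_diag (hπ : ∀ n, IsProbOn (π n) n) (hD : IsRecursiveOT π D) (x : ℕ) :
    D x x = 0 := by
  induction x using Nat.strong_induction_on with
  | _ x ih =>
    match x with
    | 0 => exact hD.1
    | (n+1) =>
      have hplan : IsPlan (π n) (π n) n n (fun i j => if i = j then π n i else 0) := by
        refine ⟨?_, ?_, ?_, ?_⟩
        · intro i j; dsimp only; split
          · exact pi_nonneg hπ n i
          · exact le_refl 0
        · intro i j hij; dsimp only; split
          · rename_i h; subst h; exact pi_zero hπ (by omega)
          · rfl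
        · intro i hi
          simp only []
          rw [Finset.sum_ite_eq (Finset.range (n+1)) i (fun _ => π n i)]
          simp [Finset.mem_range]; omega
        · intro j hj
          have : ∀ i ∈ Finset.range (n+1), (if i = j then π n i else 0)
              = if i = j then π n j else 0 := by
            intro i _; split <;> simp_all
          rw [Finset.sum_congr rfl this,
            Finset.sum_ite_eq' (Finset.range (n+1)) j (fun _ => π n j)]
          simp [Finset.mem_range]; omega
      have h1 : D (n+1) (n+1) ≤ cost D n n (fun i j => if i = j then π n i else 0) :=
        plan_le hD hplan
      have h2 : cost D n n (fun i j => if i = j then π n i else 0) = 0 := by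
        unfold cost
        apply Finset.sum_eq_zero
        intro i hi
        apply Finset.sum_eq_zero
        intro j hj
        dsimp only
        split
        · rename_i h; subst h; rw [ih i (by simp at hi; omega)]; ring
        · ring
      have h3 := D_nonneg hπ hD (n+1) (n+1)
      linarith
section Triangle

variable {π D : ℕ → ℕ → ℝ}

lemma plan_entry_zero_of_col {μ ν : ℕ → ℝ} {m n : ℕ} {z : ℕ → ℕ → ℝ}
    (hz : IsPlan μ ν m n z) {j : ℕ} (hj : j ≤ n) (hν : ν j = 0) (i : ℕ) :
    z i j = 0 := by
  rcases le_or_gt i m with him | him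
  · have hsum : ∑ i' ∈ Finset.range (m+1), z i' j = 0 := by rw [hz.2.2.2 j hj, hν]
    have := (Finset.sum_eq_zero_iff_of_nonneg (fun i' _ => hz.1 i' j)).1 hsum
    exact this i (by simp [Finset.mem_range]; omega)
  · exact hz.2.1 i j (Or.inl him)

lemma plan_entry_zero_of_row {μ ν : ℕ → ℝ} {m n : ℕ} {z : ℕ → ℕ → ℝ}
    (hz : IsPlan μ ν m n z) {i : ℕ} (hi : i ≤ m) (hμ : μ i = 0) (j : ℕ) :
    z i j = 0 := by
  rcases le_or_gt j n with hjn | hjn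
  · have hsum : ∑ j' ∈ Finset.range (n+1), z i j' = 0 := by rw [hz.2.2.1 i hi, hμ]
    have := (Finset.sum_eq_zero_iff_of_nonneg (fun j' _ => hz.1 i j')).1 hsum
    exact this j (by simp [Finset.mem_range]; omega)
  · exact hz.2.1 i j (Or.inr hjn)

lemma D_triangle (hπ : ∀ n, IsProbOn (π n) n) (hD : IsRecursiveOT π D) (x y z : ℕ) :
    D x z ≤ D x y + D y z := by
  suffices h : ∀ s x y z, x + y + z ≤ s → D x z ≤ D x y + D y z from
    h (x+y+z) x y z le_rfl
  intro s
  induction s with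
  | zero =>
    intro x y z hs
    obtain ⟨rfl, rfl, rfl⟩ : x = 0 ∧ y = 0 ∧ z = 0 := by omega
    rw [hD.1]; norm_num
  | succ s ih =>
    intro x y z hs
    have hnn := D_nonneg hπ hD
    have hle1 := D_le_one hπ hD
    match x, y, z with
    | 0, y, 0 => rw [hD.1]; have := hnn 0 y; have := hnn y 0; linarith
    | (a+1), 0, 0 => rw [hD.2.2.1, hD.1]; norm_num
    | 0, 0, (c+1) => rw [hD.2.1, hD.1]; norm_num
    | 0, (b+1), (c+1) => rw [hD.2.1, hD.2.1]; have := hnn (b+1) (c+1); linarith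
    | (a+1), 0, (c+1) =>
      rw [hD.2.2.1]; have h1 := hle1 (a+1) (c+1); have h2 := hnn 0 (c+1); linarith
    | (a+1), (b+1), 0 =>
      rw [hD.2.2.1, hD.2.2.1]; have := hnn (a+1) (b+1); linarith
    | (a+1), (b+1), (c+1) =>
      obtain ⟨z1, hz1, hc1⟩ := plan_exists hD a b
      obtain ⟨z2, hz2, hc2⟩ := plan_exists hD b c
      set t : ℕ → ℕ → ℕ → ℝ :=
        fun i j k => if π b j = 0 then 0 else z1 i j / π b j * z2 j k with ht
      have ht_nonneg : ∀ i j k, 0 ≤ t i j k := by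
        intro i j k; rw [ht]; dsimp only; split
        · exact le_refl 0
        · rename_i h
          have h1 : 0 < π b j := lt_of_le_of_ne (pi_nonneg hπ b j) (Ne.symm h)
          have h2 := hz1.1 i j
          have h3 := hz2.1 j k
          positivity
      have hz1zero : ∀ i j, j ≤ b → π b j = 0 → z1 i j = 0 := by
        intro i j hj h0; exact plan_entry_zero_of_col hz1 hj h0 i
      have hz2zero : ∀ j k, j ≤ b → π b j = 0 → z2 j k = 0 := by
        intro j k hj h0; exact plan_entry_zero_of_row hz2 hj h0 k
      have hsum_k : ∀ i, ∀ j ≤ b, ∑ k ∈ Finset.range (c+1), t i j k = z1 i j := by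
        intro i j hj
        rw [ht]; dsimp only
        by_cases h0 : π b j = 0
        · simp [h0, hz1zero i j hj h0]
        · simp only [h0, if_false]
          rw [← Finset.mul_sum, hz2.2.2.1 j hj, div_mul_cancel₀ _ h0]
      have hsum_i : ∀ j ≤ b, ∀ k, ∑ i ∈ Finset.range (a+1), t i j k = z2 j k := by
        intro j hj k
        rw [ht]; dsimp only
        by_cases h0 : π b j = 0
        · simp [h0, hz2zero j k hj h0]
        · simp only [h0, if_false]
          have : ∀ i ∈ Finset.range (a+1), z1 i j / π b j * z2 j k
              = z1 i j * (z2 j k / π b j) := by intro i _; ring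
          rw [Finset.sum_congr rfl this, ← Finset.sum_mul, hz1.2.2.2 j hj]
          field_simp
      set w : ℕ → ℕ → ℝ := fun i k => ∑ j ∈ Finset.range (b+1), t i j k with hw
      have hwplan : IsPlan (π a) (π c) a c w := by
        refine ⟨?_, ?_, ?_, ?_⟩
        · intro i k; exact Finset.sum_nonneg fun j _ => ht_nonneg i j k
        · intro i k hik
          apply Finset.sum_eq_zero
          intro j hj
          rcases hik with hi | hk
          · have : z1 i j = 0 := hz1.2.1 i j (Or.inl hi)
            rw [ht]; dsimp only; split
            · rfl
            · rw [this]; ring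
          · have : z2 j k = 0 := hz2.2.1 j k (Or.inr hk)
            rw [ht]; dsimp only; split
            · rfl
            · rw [this]; ring
        · intro i hi
          rw [hw]; dsimp only
          rw [Finset.sum_comm]
          calc ∑ j ∈ Finset.range (b+1), ∑ k ∈ Finset.range (c+1), t i j k
              = ∑ j ∈ Finset.range (b+1), z1 i j := by
                apply Finset.sum_congr rfl
                intro j hj
                exact hsum_k i j (by simp at hj; omega)
            _ = π a i := hz1.2.2.1 i hi
        · intro k hk
          rw [hw]; dsimp only
          rw [Finset.sum_comm]
          calc ∑ j ∈ Finset.range (b+1), ∑ i ∈ Finset.range (a+1), t i j k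
              = ∑ j ∈ Finset.range (b+1), z2 j k := by
                apply Finset.sum_congr rfl
                intro j hj
                exact hsum_i j (by simp at hj; omega) k
            _ = π c k := hz2.2.2.2 k hk
      have hcost : cost D a c w ≤ cost D a b z1 + cost D b c z2 := by
        have expand : cost D a c w =
            ∑ i ∈ Finset.range (a+1), ∑ k ∈ Finset.range (c+1),
              ∑ j ∈ Finset.range (b+1), t i j k * D i k := by
          unfold cost
          apply Finset.sum_congr rfl; intro i _
          apply Finset.sum_congr rfl; intro k _
          rw [hw]; dsimp only
          rw [Finset.sum_mul]
        have step1 : cost D a c w ≤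
            ∑ i ∈ Finset.range (a+1), ∑ k ∈ Finset.range (c+1),
              ∑ j ∈ Finset.range (b+1), t i j k * (D i j + D j k) := by
          rw [expand]
          apply Finset.sum_le_sum; intro i hi
          apply Finset.sum_le_sum; intro k hk
          apply Finset.sum_le_sum; intro j hj
          simp only [Finset.mem_range] at hi hk hj
          apply mul_le_mul_of_nonneg_left _ (ht_nonneg i j k)
          exact ih i j k (by omega)
        have split : (∑ i ∈ Finset.range (a+1), ∑ k ∈ Finset.range (c+1),
              ∑ j ∈ Finset.range (b+1), t i j k * (D i j + D j k))
            = (∑ i ∈ Finset.range (a+1), ∑ k ∈ Finset.range (c+1),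
              ∑ j ∈ Finset.range (b+1), t i j k * D i j)
            + (∑ i ∈ Finset.range (a+1), ∑ k ∈ Finset.range (c+1),
              ∑ j ∈ Finset.range (b+1), t i j k * D j k) := by
          rw [← Finset.sum_add_distrib]
          apply Finset.sum_congr rfl; intro i _
          rw [← Finset.sum_add_distrib]
          apply Finset.sum_congr rfl; intro k _
          rw [← Finset.sum_add_distrib]
          apply Finset.sum_congr rfl; intro j _
          ring
        have part1 : (∑ i ∈ Finset.range (a+1), ∑ k ∈ Finset.range (c+1),
              ∑ j ∈ Finset.range (b+1), t i j k * D i j) = cost D a b z1 := by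
          unfold cost
          apply Finset.sum_congr rfl; intro i _
          rw [Finset.sum_comm]
          apply Finset.sum_congr rfl; intro j hj
          rw [← Finset.sum_mul, hsum_k i j (by simp at hj; omega)]
        have part2 : (∑ i ∈ Finset.range (a+1), ∑ k ∈ Finset.range (c+1),
              ∑ j ∈ Finset.range (b+1), t i j k * D j k) = cost D b c z2 := by
          unfold cost
          rw [Finset.sum_comm]
          have hk : ∀ k ∈ Finset.range (c+1),
              (∑ i ∈ Finset.range (a+1), ∑ j ∈ Finset.range (b+1), t i j k * D j k)
              = ∑ j ∈ Finset.range (b+1), z2 j k * D j k := by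
            intro k _
            rw [Finset.sum_comm]
            apply Finset.sum_congr rfl; intro j hj
            rw [← Finset.sum_mul, hsum_i j (by simp at hj; omega) k]
          rw [Finset.sum_congr rfl hk, Finset.sum_comm]
        calc cost D a c w ≤ _ := step1
          _ = _ + _ := split
          _ = cost D a b z1 + cost D b c z2 := by rw [part1, part2]
      have hfin : D (a+1) (c+1) ≤ cost D a c w := plan_le hD hwplan
      rw [hc1, hc2]
      exact le_trans hfin hcost

end Triangle
section Compact

variable {π D : ℕ → ℕ → ℝ}

lemma plan_entry_le_one (hπ : ∀ n, IsProbOn (π n) n) {a b : ℕ} {z : ℕ → ℕ → ℝ}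
    (hz : IsPlan (π a) (π b) a b z) (i j : ℕ) : z i j ≤ 1 := by
  rcases le_or_gt i a with hi | hi
  · rcases le_or_gt j b with hj | hj
    · calc z i j ≤ ∑ j' ∈ Finset.range (b+1), z i j' :=
          Finset.single_le_sum (fun j' _ => hz.1 i j') (by simp [Finset.mem_range]; omega)
        _ = π a i := hz.2.2.1 i hi
        _ ≤ 1 := pi_le_one hπ a i
    · rw [hz.2.1 i j (Or.inr hj)]; norm_num
  · rw [hz.2.1 i j (Or.inl hi)]; norm_num

lemma continuous_eval (i j : ℕ) : Continuous (fun z : ℕ → ℕ → ℝ => z i j) :=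
  (continuous_apply j).comp (continuous_apply i)

lemma continuous_cost (D : ℕ → ℕ → ℝ) (m n : ℕ) :
    Continuous (fun z : ℕ → ℕ → ℝ => cost D m n z) := by
  unfold cost
  apply continuous_finset_sum
  intro i _
  apply continuous_finset_sum
  intro j _
  exact (continuous_eval i j).mul continuous_const

lemma plans_isClosed (μ ν : ℕ → ℝ) (a b : ℕ) :
    IsClosed {z : ℕ → ℕ → ℝ | IsPlan μ ν a b z} := by
  have h1 : IsClosed {z : ℕ → ℕ → ℝ | ∀ i j, 0 ≤ z i j} := by
    have : {z : ℕ → ℕ → ℝ | ∀ i j, 0 ≤ z i j} = ⋂ i, ⋂ j, {z | 0 ≤ z i j} := by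
      ext; simp [Set.mem_iInter]
    rw [this]
    exact isClosed_iInter fun i => isClosed_iInter fun j =>
      isClosed_le continuous_const (continuous_eval i j)
  have h2 : IsClosed {z : ℕ → ℕ → ℝ | ∀ i j, a < i ∨ b < j → z i j = 0} := by
    have : {z : ℕ → ℕ → ℝ | ∀ i j, a < i ∨ b < j → z i j = 0}
        = ⋂ i, ⋂ j, {z | a < i ∨ b < j → z i j = 0} := by
      ext; simp [Set.mem_iInter]
    rw [this]
    refine isClosed_iInter fun i => isClosed_iInter fun j => ?_
    by_cases h : a < i ∨ b < j
    · have : {z : ℕ → ℕ → ℝ | a < i ∨ b < j → z i j = 0} = {z | z i j = 0} := by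
        ext; simp [h]
      rw [this]
      exact isClosed_eq (continuous_eval i j) continuous_const
    · have : {z : ℕ → ℕ → ℝ | a < i ∨ b < j → z i j = 0} = Set.univ := by
        ext; simp [h]
      rw [this]; exact isClosed_univ
  have h3 : IsClosed {z : ℕ → ℕ → ℝ |
      ∀ i, i ≤ a → ∑ j ∈ Finset.range (b+1), z i j = μ i} := by
    have : {z : ℕ → ℕ → ℝ | ∀ i, i ≤ a → ∑ j ∈ Finset.range (b+1), z i j = μ i}
        = ⋂ i, {z | i ≤ a → ∑ j ∈ Finset.range (b+1), z i j = μ i} := by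
      ext; simp [Set.mem_iInter]
    rw [this]
    refine isClosed_iInter fun i => ?_
    by_cases h : i ≤ a
    · have : {z : ℕ → ℕ → ℝ | i ≤ a → ∑ j ∈ Finset.range (b+1), z i j = μ i}
          = {z | ∑ j ∈ Finset.range (b+1), z i j = μ i} := by ext; simp [h]
      rw [this]
      exact isClosed_eq (continuous_finset_sum _ fun j _ => continuous_eval i j)
        continuous_const
    · have : {z : ℕ → ℕ → ℝ | i ≤ a → ∑ j ∈ Finset.range (b+1), z i j = μ i}
          = Set.univ := by ext; simp [h]
      rw [this]; exact isClosed_univ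
  have h4 : IsClosed {z : ℕ → ℕ → ℝ |
      ∀ j, j ≤ b → ∑ i ∈ Finset.range (a+1), z i j = ν j} := by
    have : {z : ℕ → ℕ → ℝ | ∀ j, j ≤ b → ∑ i ∈ Finset.range (a+1), z i j = ν j}
        = ⋂ j, {z | j ≤ b → ∑ i ∈ Finset.range (a+1), z i j = ν j} := by
      ext; simp [Set.mem_iInter]
    rw [this]
    refine isClosed_iInter fun j => ?_
    by_cases h : j ≤ b
    · have : {z : ℕ → ℕ → ℝ | j ≤ b → ∑ i ∈ Finset.range (a+1), z i j = ν j}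
          = {z | ∑ i ∈ Finset.range (a+1), z i j = ν j} := by ext; simp [h]
      rw [this]
      exact isClosed_eq (continuous_finset_sum _ fun i _ => continuous_eval i j)
        continuous_const
    · have : {z : ℕ → ℕ → ℝ | j ≤ b → ∑ i ∈ Finset.range (a+1), z i j = ν j}
          = Set.univ := by ext; simp [h]
      rw [this]; exact isClosed_univ
  have : {z : ℕ → ℕ → ℝ | IsPlan μ ν a b z}
      = {z : ℕ → ℕ → ℝ | ∀ i j, 0 ≤ z i j}
        ∩ ({z | ∀ i j, a < i ∨ b < j → z i j = 0}
        ∩ ({z | ∀ i, i ≤ a → ∑ j ∈ Finset.range (b+1), z i j = μ i}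
        ∩ {z | ∀ j, j ≤ b → ∑ i ∈ Finset.range (a+1), z i j = ν j})) := by
    ext z; simp only [Set.mem_setOf_eq, Set.mem_inter_iff]; exact Iff.rfl
  rw [this]
  exact h1.inter (h2.inter (h3.inter h4))

lemma plans_isCompact (hπ : ∀ n, IsProbOn (π n) n) (a b : ℕ) :
    IsCompact {z : ℕ → ℕ → ℝ | IsPlan (π a) (π b) a b z} := by
  have hK : IsCompact (Set.pi Set.univ
      (fun _ : ℕ => Set.pi Set.univ (fun _ : ℕ => Set.Icc (0:ℝ) 1))) :=
    isCompact_univ_pi fun _ => isCompact_univ_pi fun _ => isCompact_Icc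
  apply IsCompact.of_isClosed_subset hK (plans_isClosed _ _ _ _)
  intro z hz
  simp only [Set.mem_pi, Set.mem_univ, forall_true_left, Set.mem_Icc]
  intro i j
  exact ⟨hz.1 i j, plan_entry_le_one hπ hz i j⟩

end Compact
section Exchange

/-- exchange: move mass `e` from cells `(i,j)` and `(j,k)` to `(j,j)` and `(i,k)`. -/
noncomputable def xchg (z : ℕ → ℕ → ℝ) (i j k : ℕ) (e : ℝ) : ℕ → ℕ → ℝ := fun p q =>
  z p q + (if p = j ∧ q = j then e else 0) + (if p = i ∧ q = k then e else 0)
    - (if p = i ∧ q = j then e else 0) - (if p = j ∧ q = k then e else 0)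

variable {π D : ℕ → ℕ → ℝ}

lemma sum_ite_and_left {c : ℕ} {e : ℝ} (P : Prop) [Decidable P] {N : ℕ} (hc : c < N)
    (f : ℕ → ℝ) :
    ∑ q ∈ Finset.range N, (if P ∧ q = c then e else 0) * f q
      = if P then e * f c else 0 := by
  by_cases hP : P
  · simp only [hP, true_and, if_true]
    have : ∀ q ∈ Finset.range N, (if q = c then e else 0) * f q
        = if q = c then e * f q else 0 := by
      intro q _; split <;> simp
    rw [Finset.sum_congr rfl this,
      Finset.sum_ite_eq' (Finset.range N) c (fun q => e * f q)]
    simp [hc]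
  · simp [hP]

lemma sum_ite_and_right {c : ℕ} {e : ℝ} (P : ℕ → Prop) [DecidablePred P] {N : ℕ}
    (hc : c < N) (f : ℕ → ℝ) :
    ∑ p ∈ Finset.range N, (if p = c ∧ P p then e else 0) * f p
      = if P c then e * f c else 0 := by
  have : ∀ p ∈ Finset.range N, (if p = c ∧ P p then e else 0) * f p
      = if p = c then (if P c then e * f c else 0) else 0 := by
    intro p _
    by_cases hp : p = c
    · subst hp; by_cases hP : P p <;> simp [hP]
    · simp [hp]
  rw [Finset.sum_congr rfl this, Finset.sum_ite_eq' (Finset.range N) c]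
  simp [hc]

lemma xchg_plan {a b i j k : ℕ} {z : ℕ → ℕ → ℝ} {e : ℝ}
    (hz : IsPlan (π a) (π b) a b z)
    (hi : i ≤ a) (hj : j ≤ a) (hjb : j ≤ b) (hk : k ≤ b) (hij : i ≠ j) (hkj : k ≠ j)
    (he0 : 0 ≤ e) (he1 : e ≤ z i j) (he2 : e ≤ z j k) :
    IsPlan (π a) (π b) a b (xchg z i j k e) := by
  refine ⟨?_, ?_, ?_, ?_⟩
  · intro p q
    have h0 := hz.1 p q
    unfold xchg
    by_cases h3 : p = i ∧ q = j
    · obtain ⟨hp, hq⟩ := h3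
      rw [hp, hq]
      have n1 : ¬(i = j ∧ j = j) := by rintro ⟨h, -⟩; exact hij h
      have n2 : ¬(i = i ∧ j = k) := by rintro ⟨-, h⟩; exact hkj h.symm
      have n4 : ¬(i = j ∧ j = k) := by rintro ⟨h, -⟩; exact hij h
      rw [hp, hq] at h0
      rw [if_neg n1, if_neg n2, if_neg n4, if_pos (⟨rfl, rfl⟩ : i = i ∧ j = j)]
      linarith
    · by_cases h4 : p = j ∧ q = k
      · obtain ⟨hp, hq⟩ := h4
        rw [hp, hq]
        have n1 : ¬(j = j ∧ k = j) := by rintro ⟨-, h⟩; exact hkj h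
        have n2 : ¬(j = i ∧ k = k) := by rintro ⟨h, -⟩; exact hij h.symm
        have n3 : ¬(j = i ∧ k = j) := by rintro ⟨h, -⟩; exact hij h.symm
        rw [hp, hq] at h0
        rw [if_neg n1, if_neg n2, if_neg n3, if_pos (⟨rfl, rfl⟩ : j = j ∧ k = k)]
        linarith
      · have t1 : (0:ℝ) ≤ (if p = j ∧ q = j then e else 0) := by positivity
        have t2 : (0:ℝ) ≤ (if p = i ∧ q = k then e else 0) := by positivity
        simp only [h3, h4, if_false]
        linarith
  · intro p q hpq
    unfold xchg
    have hz0 : z p q = 0 := hz.2.1 p q hpq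
    have n1 : ¬(p = j ∧ q = j) := by rintro ⟨rfl, rfl⟩; omega
    have n2 : ¬(p = i ∧ q = k) := by rintro ⟨rfl, rfl⟩; omega
    have n3 : ¬(p = i ∧ q = j) := by rintro ⟨rfl, rfl⟩; omega
    have n4 : ¬(p = j ∧ q = k) := by rintro ⟨rfl, rfl⟩; omega
    simp [n1, n2, n3, n4, hz0]
  · intro p hp
    unfold xchg
    rw [show (fun q => z p q + (if p = j ∧ q = j then e else 0)
        + (if p = i ∧ q = k then e else 0) - (if p = i ∧ q = j then e else 0)
        - (if p = j ∧ q = k then e else 0)) = fun q => z p q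
        + ((if p = j ∧ q = j then e else 0) * 1 + (if p = i ∧ q = k then e else 0) * 1
        - (if p = i ∧ q = j then e else 0) * 1 - (if p = j ∧ q = k then e else 0) * 1)
        from by funext q; ring]
    rw [Finset.sum_add_distrib]
    have e1 := sum_ite_and_left (e := e) (p = j) (N := b+1) (c := j) (by omega) (fun _ => (1:ℝ))
    have e2 := sum_ite_and_left (e := e) (p = i) (N := b+1) (c := k) (by omega) (fun _ => (1:ℝ))
    have e3 := sum_ite_and_left (e := e) (p = i) (N := b+1) (c := j) (by omega) (fun _ => (1:ℝ))
    have e4 := sum_ite_and_left (e := e) (p = j) (N := b+1) (c := k) (by omega) (fun _ => (1:ℝ))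
    have : ∑ q ∈ Finset.range (b+1),
        ((if p = j ∧ q = j then e else 0) * 1 + (if p = i ∧ q = k then e else 0) * 1
        - (if p = i ∧ q = j then e else 0) * 1 - (if p = j ∧ q = k then e else 0) * 1)
        = 0 := by
      rw [Finset.sum_sub_distrib, Finset.sum_sub_distrib, Finset.sum_add_distrib,
        e1, e2, e3, e4]
      by_cases h1 : p = j <;> by_cases h2 : p = i <;> simp [h1, h2]
    rw [this, add_zero]
    exact hz.2.2.1 p hp
  · intro q hq
    unfold xchg
    rw [show (fun p => z p q + (if p = j ∧ q = j then e else 0)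
        + (if p = i ∧ q = k then e else 0) - (if p = i ∧ q = j then e else 0)
        - (if p = j ∧ q = k then e else 0)) = fun p => z p q
        + ((if p = j ∧ q = j then e else 0) * 1 + (if p = i ∧ q = k then e else 0) * 1
        - (if p = i ∧ q = j then e else 0) * 1 - (if p = j ∧ q = k then e else 0) * 1)
        from by funext p; ring]
    rw [Finset.sum_add_distrib]
    have e1 := sum_ite_and_right (e := e) (fun _ => q = j) (N := a+1) (c := j) (by omega)
      (fun _ => (1:ℝ))
    have e2 := sum_ite_and_right (e := e) (fun _ => q = k) (N := a+1) (c := i) (by omega)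
      (fun _ => (1:ℝ))
    have e3 := sum_ite_and_right (e := e) (fun _ => q = j) (N := a+1) (c := i) (by omega)
      (fun _ => (1:ℝ))
    have e4 := sum_ite_and_right (e := e) (fun _ => q = k) (N := a+1) (c := j) (by omega)
      (fun _ => (1:ℝ))
    have : ∑ p ∈ Finset.range (a+1),
        ((if p = j ∧ q = j then e else 0) * 1 + (if p = i ∧ q = k then e else 0) * 1
        - (if p = i ∧ q = j then e else 0) * 1 - (if p = j ∧ q = k then e else 0) * 1)
        = 0 := by
      rw [Finset.sum_sub_distrib, Finset.sum_sub_distrib, Finset.sum_add_distrib,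
        e1, e2, e3, e4]
      by_cases h1 : q = j <;> by_cases h2 : q = k <;> simp [h1, h2]
    rw [this, add_zero]
    exact hz.2.2.2 q hq

lemma xchg_cost {a b i j k : ℕ} (D : ℕ → ℕ → ℝ) {z : ℕ → ℕ → ℝ} {e : ℝ}
    (hi : i ≤ a) (hj : j ≤ a) (hjb : j ≤ b) (hk : k ≤ b) :
    cost D a b (xchg z i j k e) = cost D a b z
      + e * (D j j + D i k - D i j - D j k) := by
  unfold cost xchg
  have expand : ∀ p, ∑ q ∈ Finset.range (b+1),
      (z p q + (if p = j ∧ q = j then e else 0) + (if p = i ∧ q = k then e else 0)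
        - (if p = i ∧ q = j then e else 0) - (if p = j ∧ q = k then e else 0)) * D p q
      = (∑ q ∈ Finset.range (b+1), z p q * D p q)
        + ((if p = j then e * D p j else 0) + (if p = i then e * D p k else 0)
          - (if p = i then e * D p j else 0) - (if p = j then e * D p k else 0)) := by
    intro p
    have : ∀ q ∈ Finset.range (b+1),
        (z p q + (if p = j ∧ q = j then e else 0) + (if p = i ∧ q = k then e else 0)
          - (if p = i ∧ q = j then e else 0) - (if p = j ∧ q = k then e else 0)) * D p q
        = z p q * D p q + ((if p = j ∧ q = j then e else 0) * D p q
          + (if p = i ∧ q = k then e else 0) * D p q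
          - (if p = i ∧ q = j then e else 0) * D p q
          - (if p = j ∧ q = k then e else 0) * D p q) := by
      intro q _; ring
    rw [Finset.sum_congr rfl this, Finset.sum_add_distrib]
    congr 1
    rw [Finset.sum_sub_distrib, Finset.sum_sub_distrib, Finset.sum_add_distrib,
      sum_ite_and_left (e := e) (p = j) (by omega : j < b+1) (fun q => D p q),
      sum_ite_and_left (e := e) (p = i) (by omega : k < b+1) (fun q => D p q),
      sum_ite_and_left (e := e) (p = i) (by omega : j < b+1) (fun q => D p q),
      sum_ite_and_left (e := e) (p = j) (by omega : k < b+1) (fun q => D p q)]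
  rw [Finset.sum_congr rfl (fun p _ => expand p), Finset.sum_add_distrib]
  congr 1
  rw [Finset.sum_sub_distrib, Finset.sum_sub_distrib, Finset.sum_add_distrib]
  have s1 : ∑ p ∈ Finset.range (a+1), (if p = j then e * D p j else 0) = e * D j j := by
    rw [Finset.sum_ite_eq' (Finset.range (a+1)) j (fun p => e * D p j)]
    simp [Finset.mem_range]; omega
  have s2 : ∑ p ∈ Finset.range (a+1), (if p = i then e * D p k else 0) = e * D i k := by
    rw [Finset.sum_ite_eq' (Finset.range (a+1)) i (fun p => e * D p k)]
    simp [Finset.mem_range]; omega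
  have s3 : ∑ p ∈ Finset.range (a+1), (if p = i then e * D p j else 0) = e * D i j := by
    rw [Finset.sum_ite_eq' (Finset.range (a+1)) i (fun p => e * D p j)]
    simp [Finset.mem_range]; omega
  have s4 : ∑ p ∈ Finset.range (a+1), (if p = j then e * D p k else 0) = e * D j k := by
    rw [Finset.sum_ite_eq' (Finset.range (a+1)) j (fun p => e * D p k)]
    simp [Finset.mem_range]; omega
  rw [s1, s2, s3, s4]; ring

lemma xchg_diagsum {a i j k : ℕ} {z : ℕ → ℕ → ℝ} {e : ℝ} (he0 : 0 ≤ e)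
    (hj : j ≤ a) (hij : i ≠ j) (hkj : k ≠ j) :
    (∑ p ∈ Finset.range (a+1), z p p) + e
      ≤ ∑ p ∈ Finset.range (a+1), xchg z i j k e p p := by
  unfold xchg
  have expand : ∀ p ∈ Finset.range (a+1),
      z p p + (if p = j ∧ p = j then e else 0) + (if p = i ∧ p = k then e else 0)
        - (if p = i ∧ p = j then e else 0) - (if p = j ∧ p = k then e else 0)
      = z p p + ((if p = j then e else 0) + (if p = i ∧ p = k then e else 0)) := by
    intro p _
    have n3 : ¬(p = i ∧ p = j) := by rintro ⟨rfl, rfl⟩; exact hij rfl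
    have n4 : ¬(p = j ∧ p = k) := by rintro ⟨rfl, rfl⟩; exact hkj rfl
    simp only [n3, n4, and_self, if_true, if_false]
    ring
  rw [Finset.sum_congr rfl expand, Finset.sum_add_distrib]
  have h1 : ∑ p ∈ Finset.range (a+1),
      ((if p = j then e else 0) + (if p = i ∧ p = k then e else 0))
      ≥ ∑ p ∈ Finset.range (a+1), (if p = j then e else 0) := by
    apply Finset.sum_le_sum
    intro p _
    have : (0:ℝ) ≤ (if p = i ∧ p = k then e else 0) := by positivity
    linarith
  have h2 : ∑ p ∈ Finset.range (a+1), (if p = j then e else 0) = e := by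
    rw [Finset.sum_ite_eq' (Finset.range (a+1)) j (fun _ => e)]
    simp [Finset.mem_range]; omega
  linarith

end Exchange
section DiagEps

variable {π D : ℕ → ℕ → ℝ}

/-- There are plans, diagonal on columns `≤ a`, with cost arbitrarily close to optimal. -/
lemma diag_eps (hπ : ∀ n, IsProbOn (π n) n) (hH : CondH π) (hD : IsRecursiveOT π D)
    {a b : ℕ} (hab : a ≤ b) {ε : ℝ} (hε : 0 < ε) :
    ∃ z, IsPlan (π a) (π b) a b z ∧ (∀ j, j ≤ a → ∀ i, i ≠ j → z i j = 0) ∧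
      cost D a b z ≤ D (a+1) (b+1) + ε := by
  set S := {z : ℕ → ℕ → ℝ | IsPlan (π a) (π b) a b z} with hS
  set φ : (ℕ → ℕ → ℝ) → ℝ :=
    fun z => cost D a b z - ε * ∑ p ∈ Finset.range (a+1), z p p with hφ
  have hφc : Continuous φ := by
    apply (continuous_cost D a b).sub
    exact continuous_const.mul (continuous_finset_sum _ fun p _ =>
      continuous_eval p p)
  obtain ⟨z0, hz0, hz0c⟩ := plan_exists hD a b
  have hne : S.Nonempty := ⟨z0, hz0⟩
  obtain ⟨w, hwS, hwmin⟩ :=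
    (plans_isCompact hπ a b).exists_isMinOn hne hφc.continuousOn
  have hwplan : IsPlan (π a) (π b) a b w := hwS
  -- diagonality of the minimiser
  have hdiag : ∀ j, j ≤ a → ∀ i, i ≠ j → w i j = 0 := by
    intro j hja i hijne
    by_contra hpos'
    have hwij : 0 < w i j := lt_of_le_of_ne (hwplan.1 i j) (Ne.symm hpos')
    have hia : i ≤ a := by
      by_contra hcon
      exact hpos' (hwplan.2.1 i j (Or.inl (by omega)))
    have hjb : j ≤ b := le_trans hja hab
    -- the diagonal entry is strictly less than the column mass
    have hcol : ∑ p ∈ Finset.range (a+1), w p j = π b j := hwplan.2.2.2 j hjb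
    have hpair : w j j + w i j ≤ π b j := by
      rw [← hcol]
      have : ({j, i} : Finset ℕ) ⊆ Finset.range (a+1) := by
        intro x hx; simp at hx; rcases hx with rfl | rfl <;> simp [Finset.mem_range] <;> omega
      calc w j j + w i j = ∑ p ∈ ({j, i} : Finset ℕ), w p j := by
            rw [Finset.sum_pair (Ne.symm hijne)]
        _ ≤ ∑ p ∈ Finset.range (a+1), w p j :=
            Finset.sum_le_sum_of_subset_of_nonneg this (fun p _ _ => hwplan.1 p j)
    have hrow : ∑ q ∈ Finset.range (b+1), w j q = π a j := hwplan.2.2.1 j hja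
    have hπba : π b j ≤ π a j := pi_anti hπ hH hja hab
    -- some other entry of row j is positive
    have hsum_erase : 0 < ∑ q ∈ (Finset.range (b+1)).erase j, w j q := by
      have hj_mem : j ∈ Finset.range (b+1) := by simp [Finset.mem_range]; omega
      have := Finset.add_sum_erase (Finset.range (b+1)) (fun q => w j q) hj_mem
      -- w j j + Σ_erase = Σ = π a j ≥ π b j ≥ w j j + w i j
      have h2 : w j j + ∑ q ∈ (Finset.range (b+1)).erase j, w j q = π a j := by
        rw [this]; exact hrow
      linarith
    obtain ⟨k, hk_mem, hk_pos⟩ : ∃ k ∈ (Finset.range (b+1)).erase j, 0 < w j k := by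
      by_contra hcon
      push_neg at hcon
      have : ∑ q ∈ (Finset.range (b+1)).erase j, w j q ≤ 0 :=
        Finset.sum_nonpos fun q hq => hcon q hq
      linarith
    have hkj' : k ≠ j := (Finset.mem_erase.1 hk_mem).1
    have hkb : k ≤ b := by have := (Finset.mem_erase.1 hk_mem).2; simp at this; omega
    set e := min (w i j) (w j k) with he
    have he0 : 0 < e := lt_min hwij hk_pos
    have hxplan : IsPlan (π a) (π b) a b (xchg w i j k e) :=
      xchg_plan hwplan hia hja hjb hkb hijne hkj' (le_of_lt he0)
        (min_le_left _ _) (min_le_right _ _)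
    have hφx : φ (xchg w i j k e) < φ w := by
      rw [hφ]; dsimp only
      rw [xchg_cost D hia hja hjb hkb]
      have htri : D i k ≤ D i j + D j k := D_triangle hπ hD i j k
      have hdg : D j j = 0 := D_diag hπ hD j
      have hsum := xchg_diagsum (z := w) (le_of_lt he0) hja hijne hkj'
      have hcost_le : cost D a b w + e * (D j j + D i k - D i j - D j k)
          ≤ cost D a b w := by nlinarith
      have : ε * (∑ p ∈ Finset.range (a+1), w p p) + ε * e
          ≤ ε * ∑ p ∈ Finset.range (a+1), xchg w i j k e p p := by
        rw [← mul_add]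
        exact mul_le_mul_of_nonneg_left hsum (le_of_lt hε)
      nlinarith
    exact absurd (hwmin hxplan) (not_le.mpr hφx)
  refine ⟨w, hwplan, hdiag, ?_⟩
  -- cost bound from minimality
  have hmin := hwmin (show z0 ∈ S from hz0)
  rw [hφ] at hmin
  simp only [Set.mem_setOf_eq] at hmin
  have hG0 : 0 ≤ ∑ p ∈ Finset.range (a+1), z0 p p :=
    Finset.sum_nonneg fun p _ => hz0.1 p p
  have hGw : ∑ p ∈ Finset.range (a+1), w p p ≤ 1 := by
    calc ∑ p ∈ Finset.range (a+1), w p p ≤ ∑ p ∈ Finset.range (a+1), π b p := by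
          apply Finset.sum_le_sum
          intro p hp
          simp only [Finset.mem_range] at hp
          have hpb : p ≤ b := by omega
          calc w p p ≤ ∑ i ∈ Finset.range (a+1), w i p :=
                Finset.single_le_sum (fun i _ => hwplan.1 i p)
                  (by simp [Finset.mem_range]; omega)
            _ = π b p := hwplan.2.2.2 p hpb
      _ ≤ ∑ p ∈ Finset.range (b+1), π b p := by
          apply Finset.sum_le_sum_of_subset_of_nonneg
          · intro x hx; simp [Finset.mem_range] at hx ⊢; omega
          · intro p _ _; exact pi_nonneg hπ b p
      _ = 1 := pi_sum hπ b
  have : cost D a b w ≤ cost D a b z0 + ε * (∑ p ∈ Finset.range (a+1), w p p)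
      - ε * ∑ p ∈ Finset.range (a+1), z0 p p := by linarith
  have hε1 : ε * (∑ p ∈ Finset.range (a+1), w p p) ≤ ε := by
    calc ε * (∑ p ∈ Finset.range (a+1), w p p) ≤ ε * 1 :=
          mul_le_mul_of_nonneg_left hGw (le_of_lt hε)
      _ = ε := mul_one ε
  have hε2 : 0 ≤ ε * ∑ p ∈ Finset.range (a+1), z0 p p :=
    mul_nonneg (le_of_lt hε) hG0
  rw [← hz0c] at this
  linarith

end DiagEps
section StepA

variable {π D : ℕ → ℕ → ℝ}

lemma sum_split (M N : ℕ) (h : M ≤ N) (f : ℕ → ℝ) :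
    ∑ q ∈ Finset.range N, f q
      = ∑ q ∈ Finset.range M, f q + ∑ q ∈ Finset.Ico M N, f q := by
  rw [Finset.range_eq_Ico, ← Finset.sum_Ico_consecutive f (Nat.zero_le M) h,
    ← Finset.range_eq_Ico]

lemma chainA_aux {n : ℕ}
    (IH : ∀ k, k < n → ∀ x, x ≤ k → D (x+1) (k+1) ≤ D x (k+1)) :
    ∀ i m j, i ≤ m → m ≤ j → j ≤ n → D m j ≤ D i j := by
  intro i m j him hmj hjn
  obtain ⟨t, rfl⟩ : ∃ t, m = i + t := ⟨m - i, by omega⟩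
  clear him
  induction t with
  | zero => simp
  | succ t ih =>
    have h1 : D (i + (t+1)) j ≤ D (i + t) j := by
      obtain ⟨y, rfl⟩ : ∃ y, j = y + 1 := ⟨j - 1, by omega⟩
      have : i + (t+1) = (i + t) + 1 := by omega
      rw [this]
      exact IH y (by omega) (i + t) (by omega)
    exact le_trans h1 (ih (by omega))

lemma stepA (hπ : ∀ n, IsProbOn (π n) n) (hH : CondH π) (hD : IsRecursiveOT π D)
    {n : ℕ} (IH : ∀ k, k < n → ∀ x, x ≤ k → D (x+1) (k+1) ≤ D x (k+1)) :
    ∀ m, m ≤ n → D (m+1) (n+1) ≤ D m (n+1) := by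
  intro m hmn
  match m, hmn with
  | 0, _ =>
    rw [hD.2.1 n]
    exact D_le_one hπ hD 1 (n+1)
  | (a+1), hmn =>
    -- show via ε-optimal diagonal plans
    apply le_of_forall_pos_le_add
    intro ε hε
    have han : a ≤ n := by omega
    obtain ⟨z, hz, hzdiag, hzcost⟩ := diag_eps hπ hH hD han hε
    -- ingredients
    set e : ℕ → ℝ := fun i => π a i - π (a+1) i with he_def
    set G : ℕ → ℝ := fun i => π a i - π n i with hG_def
    set r : ℕ → ℕ → ℝ := fun i q => if G i = 0 then 0 else e i / G i * z i q with hr_def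
    have he_nonneg : ∀ i, i ≤ a → 0 ≤ e i := by
      intro i hi
      have := (hH a).2 i hi
      rw [he_def]; dsimp only; linarith
    have hG_nonneg : ∀ i, i ≤ a → 0 ≤ G i := by
      intro i hi
      have := pi_anti hπ hH (le_trans hi han) (le_refl n) -- dummy
      have h2 := pi_anti hπ hH hi han
      rw [hG_def]; dsimp only; linarith
    have he_le_G : ∀ i, i ≤ a → e i ≤ G i := by
      intro i hi
      have h2 := pi_anti hπ hH (by omega : i ≤ a+1) (by omega : a+1 ≤ n)
      rw [he_def, hG_def]; dsimp only; linarith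
    have hr_nonneg : ∀ i q, i ≤ a → 0 ≤ r i q := by
      intro i q hi
      rw [hr_def]; dsimp only
      split
      · exact le_refl 0
      · rename_i h
        have h1 : 0 < G i := lt_of_le_of_ne (hG_nonneg i hi) (Ne.symm h)
        have h2 := he_nonneg i hi
        have h3 := hz.1 i q
        positivity
    have hr_le : ∀ i q, i ≤ a → r i q ≤ z i q := by
      intro i q hi
      rw [hr_def]; dsimp only
      split
      · exact hz.1 i q
      · rename_i h
        have h1 : 0 < G i := lt_of_le_of_ne (hG_nonneg i hi) (Ne.symm h)
        have h2 := he_le_G i hi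
        have h3 := hz.1 i q
        calc e i / G i * z i q ≤ 1 * z i q := by
              apply mul_le_mul_of_nonneg_right _ h3
              rw [div_le_one h1]; exact h2
          _ = z i q := one_mul _
    have hdiag_val : ∀ p, p ≤ a → z p p = π n p := by
      intro p hp
      have hcol := hz.2.2.2 p (le_trans hp han)
      rw [← hcol]
      rw [Finset.sum_eq_single p]
      · intro i _ hip; exact hzdiag p hp i hip
      · intro h; exfalso; apply h; simp [Finset.mem_range]; omega
    have hrow_z : ∀ i, i ≤ a → ∑ q ∈ Finset.Ico (a+1) (n+1), z i q = G i := by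
      intro i hi
      have hrow := hz.2.2.1 i hi
      rw [sum_split (a+1) (n+1) (by omega) (fun q => z i q)] at hrow
      have hfirst : ∑ q ∈ Finset.range (a+1), z i q = π n i := by
        rw [Finset.sum_eq_single i]
        · exact hdiag_val i hi
        · intro q hq hqi
          simp only [Finset.mem_range] at hq
          exact hzdiag q (by omega) i (by omega)
        · intro h; exfalso; apply h; simp [Finset.mem_range]; omega
      rw [hG_def]; dsimp only; linarith
    have hr_sum : ∀ i, i ≤ a → ∑ q ∈ Finset.Ico (a+1) (n+1), r i q = e i := by
      intro i hi
      by_cases h0 : G i = 0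
      · have he0 : e i = 0 := le_antisymm (h0 ▸ he_le_G i hi) (he_nonneg i hi)
        rw [he0]
        apply Finset.sum_eq_zero
        intro q _
        rw [hr_def]; dsimp only; rw [if_pos h0]
      · have : ∀ q ∈ Finset.Ico (a+1) (n+1), r i q = e i / G i * z i q := by
          intro q _; rw [hr_def]; dsimp only; rw [if_neg h0]
        rw [Finset.sum_congr rfl this, ← Finset.mul_sum, hrow_z i hi,
          div_mul_cancel₀ _ h0]
    set z' : ℕ → ℕ → ℝ := fun p q =>
      if p ≤ a then
        (if q ≤ a then (if p = q then π n p else 0) else z p q - r p q)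
      else if p = a+1 then
        (if a+1 ≤ q ∧ q ≤ n then ∑ i ∈ Finset.range (a+1), r i q else 0)
      else 0 with hz'_def
    have hz'_plan : IsPlan (π (a+1)) (π n) (a+1) n z' := by
      refine ⟨?_, ?_, ?_, ?_⟩
      · intro p q
        rw [hz'_def]; dsimp only
        split
        · rename_i hp
          split
          · split
            · exact pi_nonneg hπ n p
            · exact le_refl 0
          · have := hr_le p q hp; have := hz.1 p q; linarith
        · split
          · split
            · exact Finset.sum_nonneg fun i hi =>
                hr_nonneg i q (by simp at hi; omega)
            · exact le_refl 0
          · exact le_refl 0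
      · intro p q hpq
        rw [hz'_def]; dsimp only
        rcases hpq with hp | hq
        · -- a+1 < p
          rw [if_neg (by omega), if_neg (by omega)]
        · -- n < q
          split
          · rename_i hpa
            rw [if_neg (by omega : ¬ q ≤ a)]
            have h1 : z p q = 0 := hz.2.1 p q (Or.inr (by omega))
            have h2 : r p q = 0 := by
              rw [hr_def]; dsimp only; split
              · rfl
              · rw [h1]; ring
            rw [h1, h2]; ring
          · split
            · rw [if_neg (by omega : ¬ (a+1 ≤ q ∧ q ≤ n))]
            · rfl
      · intro p hp
        rcases Nat.lt_or_ge p (a+1) with hpa | hpa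
        · have hpa' : p ≤ a := by omega
          rw [sum_split (a+1) (n+1) (by omega) (fun q => z' p q)]
          have h1 : ∑ q ∈ Finset.range (a+1), z' p q = π n p := by
            have : ∀ q ∈ Finset.range (a+1), z' p q
                = if p = q then π n p else 0 := by
              intro q hq
              simp only [Finset.mem_range] at hq
              rw [hz'_def]; dsimp only
              rw [if_pos hpa', if_pos (by omega : q ≤ a)]
            rw [Finset.sum_congr rfl this,
              Finset.sum_ite_eq (Finset.range (a+1)) p (fun _ => π n p)]
            simp [Finset.mem_range]; omega
          have h2 : ∑ q ∈ Finset.Ico (a+1) (n+1), z' p q = G p - e p := by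
            have : ∀ q ∈ Finset.Ico (a+1) (n+1), z' p q = z p q - r p q := by
              intro q hq
              simp only [Finset.mem_Ico] at hq
              rw [hz'_def]; dsimp only
              rw [if_pos hpa', if_neg (by omega : ¬ q ≤ a)]
            rw [Finset.sum_congr rfl this, Finset.sum_sub_distrib,
              hrow_z p hpa', hr_sum p hpa']
          rw [h1, h2, he_def, hG_def]; dsimp only
          ring
        · have hpaeq : p = a+1 := by omega
          subst hpaeq
          rw [sum_split (a+1) (n+1) (by omega) (fun q => z' (a+1) q)]
          have h1 : ∑ q ∈ Finset.range (a+1), z' (a+1) q = 0 := by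
            apply Finset.sum_eq_zero
            intro q hq
            simp only [Finset.mem_range] at hq
            rw [hz'_def]; dsimp only
            rw [if_neg (by omega : ¬ a+1 ≤ a), if_pos rfl,
              if_neg (by omega : ¬ (a+1 ≤ q ∧ q ≤ n))]
          have h2 : ∑ q ∈ Finset.Ico (a+1) (n+1), z' (a+1) q
              = π (a+1) (a+1) := by
            have hstep : ∀ q ∈ Finset.Ico (a+1) (n+1), z' (a+1) q
                = ∑ i ∈ Finset.range (a+1), r i q := by
              intro q hq
              simp only [Finset.mem_Ico] at hq
              rw [hz'_def]; dsimp only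
              rw [if_neg (by omega : ¬ a+1 ≤ a), if_pos rfl,
                if_pos (by omega : a+1 ≤ q ∧ q ≤ n)]
            rw [Finset.sum_congr rfl hstep, Finset.sum_comm]
            have : ∀ i ∈ Finset.range (a+1),
                ∑ q ∈ Finset.Ico (a+1) (n+1), r i q = e i := by
              intro i hi; exact hr_sum i (by simp at hi; omega)
            rw [Finset.sum_congr rfl this]
            -- Σ e i = π (a+1) (a+1)
            have hsa : ∑ i ∈ Finset.range (a+1), π a i = 1 := pi_sum hπ a
            have hsa1 : ∑ i ∈ Finset.range (a+2), π (a+1) i = 1 := pi_sum hπ (a+1)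
            rw [Finset.sum_range_succ] at hsa1
            simp only [he_def]
            rw [Finset.sum_sub_distrib, hsa]
            linarith
          rw [h1, h2]; ring
      · intro q hq
        rw [Finset.sum_range_succ]
        rcases Nat.lt_or_ge q (a+1) with hqa | hqa
        · have hqa' : q ≤ a := by omega
          have h1 : ∑ p ∈ Finset.range (a+1), z' p q = π n q := by
            have : ∀ p ∈ Finset.range (a+1), z' p q
                = if p = q then π n p else 0 := by
              intro p hp
              simp only [Finset.mem_range] at hp
              rw [hz'_def]; dsimp only
              rw [if_pos (by omega : p ≤ a), if_pos hqa']
            rw [Finset.sum_congr rfl this,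
              Finset.sum_ite_eq' (Finset.range (a+1)) q (fun p => π n p)]
            simp [Finset.mem_range]; omega
          have h2 : z' (a+1) q = 0 := by
            rw [hz'_def]; dsimp only
            rw [if_neg (by omega : ¬ a+1 ≤ a), if_pos rfl,
              if_neg (by omega : ¬ (a+1 ≤ q ∧ q ≤ n))]
          rw [h1, h2]; ring
        · have h1 : ∑ p ∈ Finset.range (a+1), z' p q
              = π n q - ∑ i ∈ Finset.range (a+1), r i q := by
            have : ∀ p ∈ Finset.range (a+1), z' p q = z p q - r p q := by
              intro p hp
              simp only [Finset.mem_range] at hp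
              rw [hz'_def]; dsimp only
              rw [if_pos (by omega : p ≤ a), if_neg (by omega : ¬ q ≤ a)]
            rw [Finset.sum_congr rfl this, Finset.sum_sub_distrib, hz.2.2.2 q hq]
          have h2 : z' (a+1) q = ∑ i ∈ Finset.range (a+1), r i q := by
            rw [hz'_def]; dsimp only
            rw [if_neg (by omega : ¬ a+1 ≤ a), if_pos rfl,
              if_pos (by omega : a+1 ≤ q ∧ q ≤ n)]
          rw [h1, h2]; ring
    -- cost comparison
    have hchain : ∀ i q, i ≤ a → a+1 ≤ q → q ≤ n → D (a+1) q ≤ D i q :=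
      fun i q hi h1 h2 => chainA_aux IH i (a+1) q (by omega) h1 h2
    have hcost_le : cost D (a+1) n z' ≤ cost D a n z := by
      unfold cost
      rw [Finset.sum_range_succ]
      have hrowlast : ∑ q ∈ Finset.range (n+1), z' (a+1) q * D (a+1) q
          = ∑ q ∈ Finset.Ico (a+1) (n+1),
              (∑ i ∈ Finset.range (a+1), r i q) * D (a+1) q := by
        rw [sum_split (a+1) (n+1) (by omega) (fun q => z' (a+1) q * D (a+1) q)]
        have h0 : ∑ q ∈ Finset.range (a+1), z' (a+1) q * D (a+1) q = 0 := by
          apply Finset.sum_eq_zero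
          intro q hq
          simp only [Finset.mem_range] at hq
          have : z' (a+1) q = 0 := by
            rw [hz'_def]; dsimp only
            rw [if_neg (by omega : ¬ a+1 ≤ a), if_pos rfl,
              if_neg (by omega : ¬ (a+1 ≤ q ∧ q ≤ n))]
          rw [this]; ring
        rw [h0, zero_add]
        apply Finset.sum_congr rfl
        intro q hq
        simp only [Finset.mem_Ico] at hq
        rw [hz'_def]; dsimp only
        rw [if_neg (by omega : ¬ a+1 ≤ a), if_pos rfl,
          if_pos (by omega : a+1 ≤ q ∧ q ≤ n)]
      have hrowsfirst : ∀ p ∈ Finset.range (a+1),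
          ∑ q ∈ Finset.range (n+1), z' p q * D p q
          = ∑ q ∈ Finset.range (n+1), z p q * D p q
            - ∑ q ∈ Finset.Ico (a+1) (n+1), r p q * D p q := by
        intro p hp
        simp only [Finset.mem_range] at hp
        have hpa : p ≤ a := by omega
        rw [sum_split (a+1) (n+1) (by omega) (fun q => z' p q * D p q),
          sum_split (a+1) (n+1) (by omega) (fun q => z p q * D p q)]
        have e1 : ∑ q ∈ Finset.range (a+1), z' p q * D p q
            = ∑ q ∈ Finset.range (a+1), z p q * D p q := by
          apply Finset.sum_congr rfl
          intro q hq
          simp only [Finset.mem_range] at hq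
          rw [hz'_def]; dsimp only
          rw [if_pos hpa, if_pos (by omega : q ≤ a)]
          by_cases hpq : p = q
          · subst hpq; rw [if_pos rfl, hdiag_val p hpa]
          · rw [if_neg hpq, hzdiag q (by omega) p hpq]
        have e2 : ∑ q ∈ Finset.Ico (a+1) (n+1), z' p q * D p q
            = ∑ q ∈ Finset.Ico (a+1) (n+1), (z p q * D p q - r p q * D p q) := by
          apply Finset.sum_congr rfl
          intro q hq
          simp only [Finset.mem_Ico] at hq
          rw [hz'_def]; dsimp only
          rw [if_pos hpa, if_neg (by omega : ¬ q ≤ a)]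
          ring
        rw [e1, e2, Finset.sum_sub_distrib]
        ring
      rw [Finset.sum_congr rfl hrowsfirst, hrowlast, Finset.sum_sub_distrib]
      have key : ∑ q ∈ Finset.Ico (a+1) (n+1),
          (∑ i ∈ Finset.range (a+1), r i q) * D (a+1) q
          ≤ ∑ p ∈ Finset.range (a+1), ∑ q ∈ Finset.Ico (a+1) (n+1), r p q * D p q := by
        rw [Finset.sum_comm]
        apply Finset.sum_le_sum
        intro q hq
        simp only [Finset.mem_Ico] at hq
        rw [Finset.sum_mul]
        apply Finset.sum_le_sum
        intro i hi
        simp only [Finset.mem_range] at hi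
        exact mul_le_mul_of_nonneg_left
          (hchain i q (by omega) (by omega) (by omega)) (hr_nonneg i q (by omega))
      linarith
    have hlow : D (a+1+1) (n+1) ≤ cost D (a+1) n z' := plan_le hD hz'_plan
    calc D (a+1+1) (n+1) ≤ cost D (a+1) n z' := hlow
      _ ≤ cost D a n z := hcost_le
      _ ≤ D (a+1) (n+1) + ε := hzcost

end StepA
section StepB

variable {π D : ℕ → ℕ → ℝ}

lemma chainB_aux (hD : IsRecursiveOT π D) {n : ℕ}
    (IH : ∀ k, k < n → ∀ x, x ≤ k → D (x+1) (k+1) ≤ D (x+1) (k+2)) :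
    ∀ i j, i < j → j ≤ n + 1 → D i j ≤ D i (n+1) := by
  intro i j hij hjn
  match i, j, hij with
  | 0, (y+1), _ => rw [hD.2.1 y, hD.2.1 n]
  | (x+1), (y+1), hij =>
    have hxy : x < y := by omega
    have key : ∀ t, y + t ≤ n → D (x+1) (y+1) ≤ D (x+1) (y+t+1) := by
      intro t
      induction t with
      | zero => intro _; simp
      | succ t ih =>
        intro ht
        have h1 : D (x+1) (y+t+1) ≤ D (x+1) (y+t+2) :=
          IH (y+t) (by omega) x (by omega)
        have h2 := ih (by omega)
        calc D (x+1) (y+1) ≤ D (x+1) (y+t+1) := h2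
          _ ≤ D (x+1) (y+(t+1)+1) := by
            have : y + (t+1) + 1 = y + t + 2 := by omega
            rw [this]; exact h1
    have := key (n - y) (by omega)
    have heq : y + (n - y) + 1 = n + 1 := by omega
    rw [heq] at this
    exact this

lemma stepB (hπ : ∀ n, IsProbOn (π n) n) (hH : CondH π) (hD : IsRecursiveOT π D)
    {n : ℕ} (IH : ∀ k, k < n → ∀ x, x ≤ k → D (x+1) (k+1) ≤ D (x+1) (k+2)) :
    ∀ m, m ≤ n → D (m+1) (n+1) ≤ D (m+1) (n+2) := by
  intro m hmn
  apply le_of_forall_pos_le_add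
  intro ε hε
  obtain ⟨z, hz, hzdiag, hzcost⟩ := diag_eps hπ hH hD (by omega : m ≤ n+1) hε
  have hDnn := D_nonneg hπ hD
  -- ingredients
  set f : ℕ → ℝ := fun i => π n i - π (n+1) i with hf_def
  set g : ℕ → ℝ := fun i => π m i - π (n+1) i with hg_def
  set G : ℕ → ℝ := fun i => π m i - π (n+1) i - z i (n+1) with hG_def
  set av : ℕ → ℝ := fun i => max (f i - z i (n+1)) 0 with hav_def
  set bv : ℕ → ℝ := fun i => max (z i (n+1) - f i) 0 with hbv_def
  set r : ℕ → ℕ → ℝ := fun i q => if G i = 0 then 0 else av i / G i * z i q with hr_def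
  set R : ℕ → ℝ := fun q => ∑ i ∈ Finset.range (m+1), r i q with hR_def
  set c : ℕ → ℝ := fun q => f q + R q with hc_def
  set Bt : ℝ := ∑ i ∈ Finset.range (m+1), bv i with hBt_def
  set v : ℕ → ℕ → ℝ := fun i q => if Bt = 0 then 0 else bv i * c q / Bt with hv_def
  have hf_nonneg : ∀ i, i ≤ n → 0 ≤ f i := by
    intro i hi
    have := (hH n).2 i hi
    rw [hf_def]; dsimp only; linarith
  have hdiag_val : ∀ p, p ≤ m → z p p = π (n+1) p := by
    intro p hp
    have hcol := hz.2.2.2 p (by omega)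
    rw [← hcol, Finset.sum_eq_single p]
    · intro i _ hip; exact hzdiag p hp i hip
    · intro h; exfalso; apply h; simp [Finset.mem_range]; omega
  have hrow_z : ∀ i, i ≤ m → ∑ q ∈ Finset.Ico (m+1) (n+1), z i q = G i := by
    intro i hi
    have hrow := hz.2.2.1 i hi
    rw [sum_split (m+1) (n+2) (by omega) (fun q => z i q)] at hrow
    have hIcosplit : ∑ q ∈ Finset.Ico (m+1) (n+2), z i q
        = ∑ q ∈ Finset.Ico (m+1) (n+1), z i q + z i (n+1) := by
      rw [Finset.sum_Ico_succ_top (by omega : m+1 ≤ n+1)]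
    have hfirst : ∑ q ∈ Finset.range (m+1), z i q = π (n+1) i := by
      rw [Finset.sum_eq_single i]
      · exact hdiag_val i hi
      · intro q hq hqi
        simp only [Finset.mem_range] at hq
        exact hzdiag q (by omega) i (by omega)
      · intro h; exfalso; apply h; simp [Finset.mem_range]; omega
    rw [hIcosplit, hfirst] at hrow
    rw [hG_def]; dsimp only; linarith
  have hG_nonneg : ∀ i, i ≤ m → 0 ≤ G i := by
    intro i hi
    rw [← hrow_z i hi]
    exact Finset.sum_nonneg fun q _ => hz.1 i q
  have hav_nonneg : ∀ i, 0 ≤ av i := fun i => le_max_right _ _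
  have hbv_nonneg : ∀ i, 0 ≤ bv i := fun i => le_max_right _ _
  have hav_le_G : ∀ i, i ≤ m → av i ≤ G i := by
    intro i hi
    rw [hav_def]; dsimp only
    apply max_le _ (hG_nonneg i hi)
    have h1 : π n i ≤ π m i := pi_anti hπ hH hi hmn
    rw [hG_def, hf_def]; dsimp only; linarith
  have hbv_le : ∀ i, i ≤ m → bv i ≤ z i (n+1) := by
    intro i hi
    rw [hbv_def]; dsimp only
    apply max_le _ (hz.1 i (n+1))
    have := hf_nonneg i (by omega)
    linarith
  have hba : ∀ i, bv i - av i = z i (n+1) - f i := by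
    intro i
    rw [hbv_def, hav_def]; dsimp only
    rcases le_total (f i) (z i (n+1)) with h | h
    · rw [max_eq_left (by linarith), max_eq_right (by linarith)]; ring
    · rw [max_eq_right (by linarith), max_eq_left (by linarith)]; ring
  have hr_nonneg : ∀ i q, i ≤ m → 0 ≤ r i q := by
    intro i q hi
    rw [hr_def]; dsimp only
    split
    · exact le_refl 0
    · rename_i h
      have h1 : 0 < G i := lt_of_le_of_ne (hG_nonneg i hi) (Ne.symm h)
      have h2 := hav_nonneg i
      have h3 := hz.1 i q
      positivity
  have hr_le : ∀ i q, i ≤ m → r i q ≤ z i q := by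
    intro i q hi
    rw [hr_def]; dsimp only
    split
    · exact hz.1 i q
    · rename_i h
      have h1 : 0 < G i := lt_of_le_of_ne (hG_nonneg i hi) (Ne.symm h)
      have h2 := hav_le_G i hi
      calc av i / G i * z i q ≤ 1 * z i q := by
            apply mul_le_mul_of_nonneg_right _ (hz.1 i q)
            rw [div_le_one h1]; exact h2
        _ = z i q := one_mul _
  have hr_sum : ∀ i, i ≤ m → ∑ q ∈ Finset.Ico (m+1) (n+1), r i q = av i := by
    intro i hi
    by_cases h0 : G i = 0
    · have hav0 : av i = 0 := le_antisymm (h0 ▸ hav_le_G i hi) (hav_nonneg i)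
      rw [hav0]
      apply Finset.sum_eq_zero
      intro q _
      rw [hr_def]; dsimp only; rw [if_pos h0]
    · have : ∀ q ∈ Finset.Ico (m+1) (n+1), r i q = av i / G i * z i q := by
        intro q _; rw [hr_def]; dsimp only; rw [if_neg h0]
      rw [Finset.sum_congr rfl this, ← Finset.mul_sum, hrow_z i hi,
        div_mul_cancel₀ _ h0]
  have hR_nonneg : ∀ q, 0 ≤ R q := by
    intro q
    rw [hR_def]; dsimp only
    exact Finset.sum_nonneg fun i hi => hr_nonneg i q (by simp at hi; omega)
  have hc_nonneg : ∀ q, m+1 ≤ q → q ≤ n → 0 ≤ c q := by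
    intro q h1 h2
    rw [hc_def]; dsimp only
    have := hf_nonneg q h2
    have := hR_nonneg q
    linarith
  have hBt_nonneg : 0 ≤ Bt := Finset.sum_nonneg fun i hi => hbv_nonneg i
  -- sum of c equals Bt
  have hqsum : ∑ i ∈ Finset.range (m+1), z i (n+1) = π (n+1) (n+1) :=
    hz.2.2.2 (n+1) (by omega)
  have hfsum : ∑ i ∈ Finset.range (n+1), f i = π (n+1) (n+1) := by
    rw [hf_def]; dsimp only
    rw [Finset.sum_sub_distrib, pi_sum hπ n]
    have h1 : ∑ i ∈ Finset.range (n+2), π (n+1) i = 1 := pi_sum hπ (n+1)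
    rw [Finset.sum_range_succ] at h1
    linarith
  have hfsplit : ∑ i ∈ Finset.range (n+1), f i
      = ∑ i ∈ Finset.range (m+1), f i + ∑ q ∈ Finset.Ico (m+1) (n+1), f q :=
    sum_split (m+1) (n+1) (by omega) f
  have hsum_c : ∑ q ∈ Finset.Ico (m+1) (n+1), c q = Bt := by
    rw [hc_def]; dsimp only
    rw [Finset.sum_add_distrib]
    have hRsum : ∑ q ∈ Finset.Ico (m+1) (n+1), R q
        = ∑ i ∈ Finset.range (m+1), av i := by
      rw [hR_def]; dsimp only
      rw [Finset.sum_comm]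
      apply Finset.sum_congr rfl
      intro i hi
      exact hr_sum i (by simp at hi; omega)
    rw [hRsum, hBt_def]
    have hdiff : ∑ i ∈ Finset.range (m+1), bv i - ∑ i ∈ Finset.range (m+1), av i
        = ∑ i ∈ Finset.range (m+1), (z i (n+1) - f i) := by
      rw [← Finset.sum_sub_distrib]
      apply Finset.sum_congr rfl
      intro i _
      exact hba i
    rw [Finset.sum_sub_distrib, hqsum] at hdiff
    have : ∑ q ∈ Finset.Ico (m+1) (n+1), f q
        = π (n+1) (n+1) - ∑ i ∈ Finset.range (m+1), f i := by
      rw [← hfsum, hfsplit]; ring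
    rw [this]
    linarith
  have hbv_zero : Bt = 0 → ∀ i, i ≤ m → bv i = 0 := by
    intro h0 i hi
    have := (Finset.sum_eq_zero_iff_of_nonneg
      (fun i _ => hbv_nonneg i)).1 (hBt_def ▸ h0) i (by simp [Finset.mem_range]; omega)
    exact this
  have hc_zero : Bt = 0 → ∀ q ∈ Finset.Ico (m+1) (n+1), c q = 0 := by
    intro h0
    have hs : ∑ q ∈ Finset.Ico (m+1) (n+1), c q = 0 := by rw [hsum_c, h0]
    exact (Finset.sum_eq_zero_iff_of_nonneg
      (fun q hq => hc_nonneg q (by simp [Finset.mem_Ico] at hq; omega)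
        (by simp [Finset.mem_Ico] at hq; omega))).1 hs
  have hv_nonneg : ∀ i q, i ≤ m → m+1 ≤ q → q ≤ n → 0 ≤ v i q := by
    intro i q hi h1 h2
    rw [hv_def]; dsimp only
    split
    · exact le_refl 0
    · rename_i h
      have hBpos : 0 < Bt := lt_of_le_of_ne hBt_nonneg (Ne.symm h)
      have := hbv_nonneg i
      have := hc_nonneg q h1 h2
      positivity
  have hv_row : ∀ i, i ≤ m → ∑ q ∈ Finset.Ico (m+1) (n+1), v i q = bv i := by
    intro i hi
    by_cases h0 : Bt = 0
    · rw [hbv_zero h0 i hi]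
      apply Finset.sum_eq_zero
      intro q _
      rw [hv_def]; dsimp only; rw [if_pos h0]
    · have : ∀ q ∈ Finset.Ico (m+1) (n+1), v i q = bv i / Bt * c q := by
        intro q _; rw [hv_def]; dsimp only; rw [if_neg h0]; ring
      rw [Finset.sum_congr rfl this, ← Finset.mul_sum, hsum_c]
      field_simp
  have hv_col : ∀ q, q ∈ Finset.Ico (m+1) (n+1) →
      ∑ i ∈ Finset.range (m+1), v i q = c q := by
    intro q hq
    by_cases h0 : Bt = 0
    · rw [hc_zero h0 q hq]
      apply Finset.sum_eq_zero
      intro i _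
      rw [hv_def]; dsimp only; rw [if_pos h0]
    · have : ∀ i ∈ Finset.range (m+1), v i q = bv i * (c q / Bt) := by
        intro i _; rw [hv_def]; dsimp only; rw [if_neg h0]; ring
      rw [Finset.sum_congr rfl this, ← Finset.sum_mul, ← hBt_def]
      field_simp
  -- the new plan
  set z' : ℕ → ℕ → ℝ := fun p q =>
    if p ≤ m then
      (if q ≤ m then (if p = q then π n p else 0)
       else if q ≤ n then z p q - r p q + v p q else 0)
    else 0 with hz'_def
  have hz'_plan : IsPlan (π m) (π n) m n z' := by
    refine ⟨?_, ?_, ?_, ?_⟩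
    · intro p q
      rw [hz'_def]; dsimp only
      split
      · rename_i hp
        split
        · split
          · exact pi_nonneg hπ n p
          · exact le_refl 0
        · split
          · rename_i hq1 hq2
            have h1 := hr_le p q hp
            have h2 := hv_nonneg p q hp (by omega) (by omega)
            have h3 := hz.1 p q
            linarith
          · exact le_refl 0
      · exact le_refl 0
    · intro p q hpq
      rw [hz'_def]; dsimp only
      rcases hpq with hp | hq
      · rw [if_neg (by omega)]
      · split
        · rw [if_neg (by omega : ¬ q ≤ m), if_neg (by omega : ¬ q ≤ n)]
        · rfl
    · intro p hp
      rw [sum_split (m+1) (n+1) (by omega) (fun q => z' p q)]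
      have h1 : ∑ q ∈ Finset.range (m+1), z' p q = π n p := by
        have : ∀ q ∈ Finset.range (m+1), z' p q = if p = q then π n p else 0 := by
          intro q hq
          simp only [Finset.mem_range] at hq
          rw [hz'_def]; dsimp only
          rw [if_pos hp, if_pos (by omega : q ≤ m)]
        rw [Finset.sum_congr rfl this,
          Finset.sum_ite_eq (Finset.range (m+1)) p (fun _ => π n p)]
        simp [Finset.mem_range]; omega
      have h2 : ∑ q ∈ Finset.Ico (m+1) (n+1), z' p q = G p - av p + bv p := by
        have : ∀ q ∈ Finset.Ico (m+1) (n+1), z' p q = z p q - r p q + v p q := by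
          intro q hq
          simp only [Finset.mem_Ico] at hq
          rw [hz'_def]; dsimp only
          rw [if_pos hp, if_neg (by omega : ¬ q ≤ m), if_pos (by omega : q ≤ n)]
        rw [Finset.sum_congr rfl this, Finset.sum_add_distrib,
          Finset.sum_sub_distrib, hrow_z p hp, hr_sum p hp, hv_row p hp]
      rw [h1, h2]
      have hba' := hba p
      rw [hG_def, hf_def] at *
      dsimp only
      dsimp only at hba'
      linarith
    · intro q hq
      rcases Nat.lt_or_ge q (m+1) with hqm | hqm
      · have hqm' : q ≤ m := by omega
        have : ∀ p ∈ Finset.range (m+1), z' p q = if p = q then π n p else 0 := by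
          intro p hp
          simp only [Finset.mem_range] at hp
          rw [hz'_def]; dsimp only
          rw [if_pos (by omega : p ≤ m), if_pos hqm']
        rw [Finset.sum_congr rfl this,
          Finset.sum_ite_eq' (Finset.range (m+1)) q (fun p => π n p)]
        simp [Finset.mem_range]; omega
      · have : ∀ p ∈ Finset.range (m+1), z' p q = z p q - r p q + v p q := by
          intro p hp
          simp only [Finset.mem_range] at hp
          rw [hz'_def]; dsimp only
          rw [if_pos (by omega : p ≤ m), if_neg (by omega : ¬ q ≤ m),
            if_pos (by omega : q ≤ n)]
        rw [Finset.sum_congr rfl this, Finset.sum_add_distrib,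
          Finset.sum_sub_distrib, hz.2.2.2 q (by omega),
          hv_col q (by simp [Finset.mem_Ico]; omega)]
        rw [hc_def, hR_def, hf_def]; dsimp only
        ring
  -- cost comparison
  have hchain : ∀ p q, p ≤ m → m+1 ≤ q → q ≤ n → D p q ≤ D p (n+1) :=
    fun p q hp h1 h2 => chainB_aux hD IH p q (by omega) (by omega)
  have hDd : ∀ p, D p p = 0 := D_diag hπ hD
  have hcost_z : cost D m (n+1) z
      = (∑ p ∈ Finset.range (m+1), ∑ q ∈ Finset.Ico (m+1) (n+1), z p q * D p q)
        + ∑ p ∈ Finset.range (m+1), z p (n+1) * D p (n+1) := by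
    unfold cost
    rw [← Finset.sum_add_distrib]
    apply Finset.sum_congr rfl
    intro p hp
    simp only [Finset.mem_range] at hp
    rw [sum_split (m+1) (n+2) (by omega) (fun q => z p q * D p q),
      Finset.sum_Ico_succ_top (by omega : m+1 ≤ n+1)]
    have h0 : ∑ q ∈ Finset.range (m+1), z p q * D p q = 0 := by
      apply Finset.sum_eq_zero
      intro q hq
      simp only [Finset.mem_range] at hq
      by_cases hpq : p = q
      · subst hpq; rw [hDd p]; ring
      · rw [hzdiag q (by omega) p hpq]; ring
    rw [h0]; ring
  have hcost_z' : cost D m n z'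
      = ∑ p ∈ Finset.range (m+1), ∑ q ∈ Finset.Ico (m+1) (n+1),
          (z p q - r p q + v p q) * D p q := by
    unfold cost
    apply Finset.sum_congr rfl
    intro p hp
    simp only [Finset.mem_range] at hp
    rw [sum_split (m+1) (n+1) (by omega) (fun q => z' p q * D p q)]
    have h0 : ∑ q ∈ Finset.range (m+1), z' p q * D p q = 0 := by
      apply Finset.sum_eq_zero
      intro q hq
      simp only [Finset.mem_range] at hq
      rw [hz'_def]; dsimp only
      rw [if_pos (by omega : p ≤ m), if_pos (by omega : q ≤ m)]
      by_cases hpq : p = q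
      · subst hpq; rw [hDd p]; ring
      · rw [if_neg hpq]; ring
    rw [h0, zero_add]
    apply Finset.sum_congr rfl
    intro q hq
    simp only [Finset.mem_Ico] at hq
    rw [hz'_def]; dsimp only
    rw [if_pos (by omega : p ≤ m), if_neg (by omega : ¬ q ≤ m),
      if_pos (by omega : q ≤ n)]
  have hkey : cost D m n z' ≤ cost D m (n+1) z := by
    rw [hcost_z, hcost_z']
    have hsplit3 : ∀ p ∈ Finset.range (m+1),
        ∑ q ∈ Finset.Ico (m+1) (n+1), (z p q - r p q + v p q) * D p q
        ≤ (∑ q ∈ Finset.Ico (m+1) (n+1), z p q * D p q) + z p (n+1) * D p (n+1) := by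
      intro p hp
      simp only [Finset.mem_range] at hp
      have e1 : ∑ q ∈ Finset.Ico (m+1) (n+1), (z p q - r p q + v p q) * D p q
          = (∑ q ∈ Finset.Ico (m+1) (n+1), z p q * D p q)
            - (∑ q ∈ Finset.Ico (m+1) (n+1), r p q * D p q)
            + ∑ q ∈ Finset.Ico (m+1) (n+1), v p q * D p q := by
        rw [← Finset.sum_sub_distrib, ← Finset.sum_add_distrib]
        apply Finset.sum_congr rfl
        intro q _; ring
      have e2 : 0 ≤ ∑ q ∈ Finset.Ico (m+1) (n+1), r p q * D p q := by
        apply Finset.sum_nonneg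
        intro q hq
        exact mul_nonneg (hr_nonneg p q (by omega)) (hDnn p q)
      have e3 : ∑ q ∈ Finset.Ico (m+1) (n+1), v p q * D p q
          ≤ z p (n+1) * D p (n+1) := by
        calc ∑ q ∈ Finset.Ico (m+1) (n+1), v p q * D p q
            ≤ ∑ q ∈ Finset.Ico (m+1) (n+1), v p q * D p (n+1) := by
              apply Finset.sum_le_sum
              intro q hq
              simp only [Finset.mem_Ico] at hq
              exact mul_le_mul_of_nonneg_left
                (hchain p q (by omega) (by omega) (by omega))
                (hv_nonneg p q (by omega) (by omega) (by omega))
          _ = bv p * D p (n+1) := by rw [← Finset.sum_mul, hv_row p (by omega)]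
          _ ≤ z p (n+1) * D p (n+1) := by
              apply mul_le_mul_of_nonneg_right _ (hDnn p (n+1))
              exact hbv_le p (by omega)
      linarith
    calc ∑ p ∈ Finset.range (m+1), ∑ q ∈ Finset.Ico (m+1) (n+1),
          (z p q - r p q + v p q) * D p q
        ≤ ∑ p ∈ Finset.range (m+1),
            ((∑ q ∈ Finset.Ico (m+1) (n+1), z p q * D p q)
              + z p (n+1) * D p (n+1)) := Finset.sum_le_sum hsplit3
      _ = _ := by rw [Finset.sum_add_distrib]
  calc D (m+1) (n+1) ≤ cost D m n z' := plan_le hD hz'_plan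
    _ ≤ cost D m (n+1) z := hkey
    _ ≤ D (m+1) (n+2) + ε := hzcost

end StepB


/-- under condition (H), in the region `m ≤ n` the distance `d_{m,n}`
is nonincreasing in `m` (`d_{m,n} ≤ d_{m-1,n}` for `0 ≤ m ≤ n`) and nondecreasing in
`n` (`d_{m,n} ≤ d_{m,n+1}`). Indices are shifted: `D (m+1) (n+1) = d_{m,n}`. -/
theorem recursiveOT_monotone (π D : ℕ → ℕ → ℝ)
    (hπ : ∀ n, IsProbOn (π n) n)
    (hH : CondH π)
    (hD : IsRecursiveOT π D) :
    (∀ m n : ℕ, m ≤ n → D (m + 1) (n + 1) ≤ D m (n + 1)) ∧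
    (∀ m n : ℕ, m ≤ n → D (m + 1) (n + 1) ≤ D (m + 1) (n + 2)) := by
  have hA : ∀ n m : ℕ, m ≤ n → D (m + 1) (n + 1) ≤ D m (n + 1) := by
    intro n
    induction n using Nat.strong_induction_on with
    | _ n ih => exact fun m hm => stepA hπ hH hD (fun k hk x hx => ih k hk x hx) m hm
  have hB : ∀ n m : ℕ, m ≤ n → D (m + 1) (n + 1) ≤ D (m + 1) (n + 2) := by
    intro n
    induction n using Nat.strong_induction_on with
    | _ n ih => exact fun m hm => stepB hπ hH hD (fun k hk x hx => ih k hk x hx) m hm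
  exact ⟨fun m n h => hA n m h, fun m n h => hB n m h⟩
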